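/- For every set I ⊆ ℕ, every j ≥ 1, and every n ∈ ℕ, the j-th A[I]-extension of the string 0^n belongs to B_{n mod 3}^j. (Since A[I] is an infinite subset of {0}*, every string 0^n has a unique j-th A[I]-extension for every j ≥ 1.) -/
import Mathlib


/-- Shortlex order on strings: first by length, then lexicographically. -/
def ShortlexLt {σ : Type*} [LinearOrder σ] (x y : List σ) : Prop :=
  x.length < y.length ∨ (x.length = y.length ∧ List.Lex (· < ·) x y)

/-- `y` is the `j`-th `A`-extension of `x`: `y ∈ A_x` and exactly `j - 1`
elements of `A_x = {z | x ++ z ∈ A}` are shortlex-smaller than `y`. -/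
def IsNthExt {σ : Type*} [LinearOrder σ] (A : Set (List σ)) (j : ℕ) (x y : List σ) : Prop :=
  x ++ y ∈ A ∧ {z | x ++ z ∈ A ∧ ShortlexLt z y}.encard = ((j - 1 : ℕ) : ℕ∞)

/-- `A^(j)`: the set of all `j`-th `A`-extensions. -/
def ExtSet {σ : Type*} [LinearOrder σ] (A : Set (List σ)) (j : ℕ) : Set (List σ) :=
  {y | ∃ x, IsNthExt A j x y}

/-- `I' = {3i : i ∈ ℕ} ∪ {3i+1 : i ∈ I} ∪ {3i+2 : i ∈ ℕ \\ I}`. -/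
def Iext (I : Set ℕ) : Set ℕ :=
  {k | (∃ i : ℕ, k = 3 * i) ∨ (∃ i ∈ I, k = 3 * i + 1) ∨ (∃ i : ℕ, i ∉ I ∧ k = 3 * i + 2)}

/-- The language `A[I] = {0^n : n ∈ I'}` of Construction 4.1. -/
def AofI (I : Set ℕ) : Set (List (Fin 1)) :=
  {w | ∃ n ∈ Iext I, w = List.replicate n 0}

/-- The languages `B_0^j` of Construction 4.4 (over the one-letter alphabet). -/
def B0 : ℕ → Language (Fin 1)
  | 0 => 0
  | 1 => {[]}
  | (n + 2) => if (n + 2) % 2 = 0 then B0 (n + 1) * {[0], [0, 0]} else B0 n * {[0, 0, 0]}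

/-- The languages `B_1^j` of Construction 4.4 (over the one-letter alphabet). -/
def B1 : ℕ → Language (Fin 1)
  | 0 => 0
  | 1 => {[], [0]}
  | 2 => {[0, 0]}
  | (n + 3) => if (n + 3) % 2 = 0 then B1 (n + 1) * {[0, 0, 0]} else B1 (n + 2) * {[0], [0, 0]}

/-- The languages `B_2^j` of Construction 4.4 (over the one-letter alphabet). -/
def B2 : ℕ → Language (Fin 1)
  | 0 => 0
  | 1 => {[], [0]}
  | 2 => {[0], [0, 0], [0, 0, 0]}
  | (n + 3) => if (n + 3) % 2 = 0 then B2 (n + 2) * {[0, 0]} else B2 (n + 2) * {[0]}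

/-- `B_{m}^j` for `m ∈ {0,1,2}`. -/
def Bfam (m : ℕ) : ℕ → Language (Fin 1) :=
  if m = 0 then B0 else if m = 1 then B1 else B2

section Infra
open List

lemma list_fin1_eq (z : List (Fin 1)) : z = List.replicate z.length 0 := by
  induction z with
  | nil => rfl
  | cons a t ih =>
    simp only [List.length_cons, List.replicate_succ]
    rw [Subsingleton.elim a 0, ← ih]

lemma lex_irrefl_fin1 (l : List (Fin 1)) : ¬ List.Lex (· < ·) l l := by
  induction l with
  | nil => intro h; cases h
  | cons a t ih => intro h; cases h with
    | rel h => exact absurd h (lt_irrefl a)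
    | cons h => exact ih h

lemma shortlex_replicate (a b : ℕ) :
    ShortlexLt (List.replicate a (0 : Fin 1)) (List.replicate b 0) ↔ a < b := by
  constructor
  · rintro (h | ⟨he, hl⟩)
    · simpa using h
    · simp only [List.length_replicate] at he
      subst he
      exact absurd hl (lex_irrefl_fin1 _)
  · intro h; exact Or.inl (by simpa using h)

lemma mem_AofI (I : Set ℕ) (m : ℕ) :
    List.replicate m (0 : Fin 1) ∈ AofI I ↔ m ∈ Iext I := by
  constructor
  · rintro ⟨k, hk, he⟩
    have : m = k := by simpa using congrArg List.length he
    subst this; exact hk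
  · intro h; exact ⟨m, h, rfl⟩

lemma mem_Iext_3 (I : Set ℕ) (i : ℕ) : 3 * i ∈ Iext I := Or.inl ⟨i, rfl⟩

lemma mem_Iext_1 {I : Set ℕ} {i : ℕ} (h : i ∈ I) : 3 * i + 1 ∈ Iext I :=
  Or.inr (Or.inl ⟨i, h, rfl⟩)

lemma mem_Iext_2 {I : Set ℕ} {i : ℕ} (h : i ∉ I) : 3 * i + 2 ∈ Iext I :=
  Or.inr (Or.inr ⟨i, h, rfl⟩)

lemma mem_Iext_1_iff (I : Set ℕ) (i : ℕ) : 3 * i + 1 ∈ Iext I ↔ i ∈ I := by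
  constructor
  · rintro (⟨i', e⟩ | ⟨i', hi', e⟩ | ⟨i', hi', e⟩)
    · omega
    · have : i' = i := by omega
      subst this; exact hi'
    · omega
  · exact mem_Iext_1

lemma mem_Iext_2_iff (I : Set ℕ) (i : ℕ) : 3 * i + 2 ∈ Iext I ↔ i ∉ I := by
  constructor
  · rintro (⟨i', e⟩ | ⟨i', hi', e⟩ | ⟨i', hi', e⟩)
    · omega
    · omega
    · have : i' = i := by omega
      subst this; exact hi'
  · exact mem_Iext_2

end Infra

open scoped Classical in
noncomputable def cnt (I : Set ℕ) (n M : ℕ) : ℕ :=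
  ((Finset.range M).filter (fun m => n + m ∈ Iext I)).card

open scoped Classical in
lemma cnt_succ (I : Set ℕ) (n t : ℕ) :
    cnt I n (t + 1) = cnt I n t + (if n + t ∈ Iext I then 1 else 0) := by
  unfold cnt
  rw [Finset.range_add_one, Finset.filter_insert]
  split
  · rw [Finset.card_insert_of_notMem (by simp)]
  · simp

lemma cnt_zero (I : Set ℕ) (n : ℕ) : cnt I n 0 = 0 := by simp [cnt]

lemma isNthExt_of (I : Set ℕ) (j n M : ℕ) (h1 : n + M ∈ Iext I) (h2 : cnt I n M = j - 1) :
    IsNthExt (AofI I) j (List.replicate n 0) (List.replicate M 0) := by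
  classical
  constructor
  · rw [← List.replicate_add]
    exact (mem_AofI I _).mpr h1
  · have hset : {z | List.replicate n 0 ++ z ∈ AofI I ∧ ShortlexLt z (List.replicate M 0)} =
        (fun m => List.replicate m (0 : Fin 1)) '' {m | n + m ∈ Iext I ∧ m < M} := by
      ext z
      constructor
      · rintro ⟨hz, hlt⟩
        refine ⟨z.length, ⟨?_, ?_⟩, (list_fin1_eq z).symm⟩
        · rw [list_fin1_eq z, ← List.replicate_add] at hz
          exact (mem_AofI I _).mp hz
        · rw [list_fin1_eq z] at hlt
          exact (shortlex_replicate _ _).mp hlt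
      · rintro ⟨m, ⟨hm, hlt⟩, rfl⟩
        exact ⟨by rw [← List.replicate_add]; exact (mem_AofI I _).mpr hm,
          (shortlex_replicate _ _).mpr hlt⟩
    have hinj : Function.Injective (fun m => List.replicate m (0 : Fin 1)) := by
      intro a b h
      simpa using congrArg List.length h
    rw [hset, hinj.encard_image _]
    have hco : {m | n + m ∈ Iext I ∧ m < M} =
        ↑((Finset.range M).filter (fun m => n + m ∈ Iext I)) := by
      ext m; simp [and_comm]
    rw [hco, Set.encard_coe_eq_coe_finsetCard]
    unfold cnt at h2
    exact_mod_cast h2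

open scoped Classical in
lemma if_mem3 (I : Set ℕ) {s : ℕ} (i : ℕ) (h : s = 3 * i) :
    (if s ∈ Iext I then 1 else 0) = 1 := by
  subst h; simp [mem_Iext_3]

open scoped Classical in
lemma if_mem1 (I : Set ℕ) {s : ℕ} (i : ℕ) (h : s = 3 * i + 1) :
    (if s ∈ Iext I then 1 else 0) = (if i ∈ I then 1 else 0) := by
  subst h; simp [mem_Iext_1_iff]

open scoped Classical in
lemma if_mem2 (I : Set ℕ) {s : ℕ} (i : ℕ) (h : s = 3 * i + 2) :
    (if s ∈ Iext I then 1 else 0) = (if i ∈ I then 0 else 1) := by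
  subst h
  by_cases hi : i ∈ I
  · simp [mem_Iext_2_iff, hi]
  · simp [mem_Iext_2_iff, hi]

open scoped Classical in
lemma cnt0 (I : Set ℕ) (q k : ℕ) : cnt I (3 * q) (3 * k) = 2 * k := by
  induction k with
  | zero => simp [cnt_zero]
  | succ k ih =>
    rw [show 3 * (k + 1) = 3 * k + 1 + 1 + 1 by ring, cnt_succ, cnt_succ, cnt_succ, ih,
      if_mem3 I (q + k) (show 3*q + 3*k = 3*(q+k) by ring), if_mem1 I (q + k) (show 3*q + (3*k+1) = 3*(q+k)+1 by ring), if_mem2 I (q + k) (show 3*q + (3*k+1+1) = 3*(q+k)+2 by ring)]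
    by_cases h : q + k ∈ I <;> simp [h] <;> ring

open scoped Classical in
lemma cnt1 (I : Set ℕ) (q k : ℕ) : cnt I (3 * q + 1) (3 * k + 2) = 2 * k + 1 := by
  induction k with
  | zero =>
    rw [show (3 * 0 + 2 : ℕ) = 0 + 1 + 1 by ring, cnt_succ, cnt_succ, cnt_zero,
      if_mem1 I q (show 3*q+1 + 0 = 3*q+1 by ring), if_mem2 I q (show 3*q+1 + (0+1) = 3*q+2 by ring)]
    by_cases h : q ∈ I <;> simp [h]
  | succ k ih =>
    rw [show 3 * (k + 1) + 2 = 3 * k + 2 + 1 + 1 + 1 by ring, cnt_succ, cnt_succ, cnt_succ, ih,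
      if_mem3 I (q + k + 1) (show 3*q+1 + (3*k+2) = 3*(q+k+1) by ring), if_mem1 I (q + k + 1) (show 3*q+1 + (3*k+2+1) = 3*(q+k+1)+1 by ring),
      if_mem2 I (q + k + 1) (show 3*q+1 + (3*k+2+1+1) = 3*(q+k+1)+2 by ring)]
    by_cases h : q + k + 1 ∈ I <;> simp [h] <;> ring

open scoped Classical in
lemma cnt2 (I : Set ℕ) (q k : ℕ) :
    cnt I (3 * q + 2) (3 * k + 1) = 2 * k + (if q ∈ I then 0 else 1) := by
  induction k with
  | zero =>
    rw [show (3 * 0 + 1 : ℕ) = 0 + 1 by ring, cnt_succ, cnt_zero, if_mem2 I q (show 3*q+2 + 0 = 3*q+2 by ring)]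
  | succ k ih =>
    rw [show 3 * (k + 1) + 1 = 3 * k + 1 + 1 + 1 + 1 by ring, cnt_succ, cnt_succ, cnt_succ, ih,
      if_mem3 I (q + k + 1) (show 3*q+2 + (3*k+1) = 3*(q+k+1) by ring), if_mem1 I (q + k + 1) (show 3*q+2 + (3*k+1+1) = 3*(q+k+1)+1 by ring),
      if_mem2 I (q + k + 1) (show 3*q+2 + (3*k+1+1+1) = 3*(q+k+1)+2 by ring)]
    by_cases h : q + k + 1 ∈ I <;> by_cases hq : q ∈ I <;> simp [h, hq] <;> ring
lemma B0_even (k : ℕ) : B0 (2 * k + 2) = B0 (2 * k + 1) * {[0], [0, 0]} := by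
  rw [show 2 * k + 2 = (2 * k) + 2 by rfl, B0]
  simp

lemma B0_odd (k : ℕ) : B0 (2 * k + 3) = B0 (2 * k + 1) * {[0, 0, 0]} := by
  rw [show 2 * k + 3 = (2 * k + 1) + 2 by rfl, B0]
  simp [Nat.add_mod]

lemma B1_even (k : ℕ) : B1 (2 * k + 4) = B1 (2 * k + 2) * {[0, 0, 0]} := by
  rw [show 2 * k + 4 = (2 * k + 1) + 3 by rfl, B1]
  simp [Nat.add_mod]

lemma B1_odd (k : ℕ) : B1 (2 * k + 3) = B1 (2 * k + 2) * {[0], [0, 0]} := by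
  rw [show 2 * k + 3 = (2 * k) + 3 by rfl, B1]
  simp [Nat.add_mod]

lemma B2_odd (k : ℕ) : B2 (2 * k + 3) = B2 (2 * k + 2) * {[0]} := by
  rw [show 2 * k + 3 = (2 * k) + 3 by rfl, B2]
  simp [Nat.add_mod]

lemma B2_even (k : ℕ) : B2 (2 * k + 4) = B2 (2 * k + 3) * {[0, 0]} := by
  rw [show 2 * k + 4 = (2 * k + 1) + 3 by rfl, B2]
  simp [Nat.add_mod]

lemma rep0 : List.replicate 0 (0 : Fin 1) = [] := rfl
lemma rep1 : List.replicate 1 (0 : Fin 1) = [0] := rfl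
lemma rep2 : List.replicate 2 (0 : Fin 1) = [0, 0] := rfl
lemma rep3 : List.replicate 3 (0 : Fin 1) = [0, 0, 0] := rfl

lemma mem_mul_of (L M : Language (Fin 1)) (a b c : ℕ)
    (hL : List.replicate a (0 : Fin 1) ∈ L) (hM : List.replicate b (0 : Fin 1) ∈ M)
    (hc : c = a + b) :
    List.replicate c (0 : Fin 1) ∈ L * M := by
  subst hc
  rw [List.replicate_add]
  exact Language.append_mem_mul hL hM

lemma b0mem (k : ℕ) : (List.replicate (3 * k) (0 : Fin 1) ∈ B0 (2 * k + 1)) ∧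
    (∀ m, m = 3 * k + 1 ∨ m = 3 * k + 2 → List.replicate m (0 : Fin 1) ∈ B0 (2 * k + 2)) := by
  induction k with
  | zero =>
    refine ⟨by rw [show 3 * 0 = 0 by rfl, rep0]; exact rfl, ?_⟩
    rintro m (rfl | rfl)
    · exact B0_even 0 ▸ mem_mul_of _ _ 0 1 _ (rep0 ▸ rfl) (rep1 ▸ Set.mem_insert _ _) (by ring)
    · exact B0_even 0 ▸ mem_mul_of _ _ 0 2 _ (rep0 ▸ rfl)
        (rep2 ▸ Set.mem_insert_iff.mpr (Or.inr rfl)) (by ring)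
  | succ k ih =>
    have h1 : List.replicate (3 * (k + 1)) (0 : Fin 1) ∈ B0 (2 * (k + 1) + 1) := by
      rw [show 2 * (k + 1) + 1 = 2 * k + 3 by ring, B0_odd]
      exact mem_mul_of _ _ (3 * k) 3 _ ih.1 (rep3 ▸ rfl) (by ring)
    refine ⟨h1, ?_⟩
    have he : B0 (2 * (k + 1) + 2) = B0 (2 * (k + 1) + 1) * {[0], [0, 0]} := B0_even (k + 1)
    rintro m (rfl | rfl)
    · exact he ▸ mem_mul_of _ _ (3 * (k + 1)) 1 _ h1 (rep1 ▸ Set.mem_insert _ _) (by ring)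
    · exact he ▸ mem_mul_of _ _ (3 * (k + 1)) 2 _ h1
        (rep2 ▸ Set.mem_insert_iff.mpr (Or.inr rfl)) (by ring)

lemma b1mem (k : ℕ) : (List.replicate (3 * k + 2) (0 : Fin 1) ∈ B1 (2 * k + 2)) ∧
    (∀ m, m = 3 * k + 3 ∨ m = 3 * k + 4 → List.replicate m (0 : Fin 1) ∈ B1 (2 * k + 3)) := by
  induction k with
  | zero =>
    have h1 : List.replicate (3 * 0 + 2) (0 : Fin 1) ∈ B1 (2 * 0 + 2) := by
      rw [show 3 * 0 + 2 = 2 by rfl, rep2]; exact rfl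
    refine ⟨h1, ?_⟩
    have he : B1 (2 * 0 + 3) = B1 (2 * 0 + 2) * {[0], [0, 0]} := B1_odd 0
    rintro m (rfl | rfl)
    · exact he ▸ mem_mul_of _ _ 2 1 _ h1 (rep1 ▸ Set.mem_insert _ _) (by ring)
    · exact he ▸ mem_mul_of _ _ 2 2 _ h1 (rep2 ▸ Set.mem_insert_iff.mpr (Or.inr rfl)) (by ring)
  | succ k ih =>
    have h1 : List.replicate (3 * (k + 1) + 2) (0 : Fin 1) ∈ B1 (2 * (k + 1) + 2) := by
      rw [show 2 * (k + 1) + 2 = 2 * k + 4 by ring, B1_even]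
      exact mem_mul_of _ _ (3 * k + 2) 3 _ ih.1 (rep3 ▸ rfl) (by ring)
    refine ⟨h1, ?_⟩
    have he : B1 (2 * (k + 1) + 3) = B1 (2 * (k + 1) + 2) * {[0], [0, 0]} := B1_odd (k + 1)
    rintro m (rfl | rfl)
    · exact he ▸ mem_mul_of _ _ (3 * (k + 1) + 2) 1 _ h1 (rep1 ▸ Set.mem_insert _ _) (by ring)
    · exact he ▸ mem_mul_of _ _ (3 * (k + 1) + 2) 2 _ h1
        (rep2 ▸ Set.mem_insert_iff.mpr (Or.inr rfl)) (by ring)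

lemma b2mem (k : ℕ) :
    (∀ m, m = 3 * k + 1 ∨ m = 3 * k + 2 ∨ m = 3 * k + 3 →
      List.replicate m (0 : Fin 1) ∈ B2 (2 * k + 2)) ∧
    (∀ m, m = 3 * k + 2 ∨ m = 3 * k + 3 ∨ m = 3 * k + 4 →
      List.replicate m (0 : Fin 1) ∈ B2 (2 * k + 3)) := by
  induction k with
  | zero =>
    have h1 : ∀ m, m = 3 * 0 + 1 ∨ m = 3 * 0 + 2 ∨ m = 3 * 0 + 3 →
        List.replicate m (0 : Fin 1) ∈ B2 (2 * 0 + 2) := by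
      rintro m (rfl | rfl | rfl)
      · rw [show 3 * 0 + 1 = 1 by rfl, rep1]
        exact Set.mem_insert _ _
      · rw [show 3 * 0 + 2 = 2 by rfl, rep2]
        exact Set.mem_insert_iff.mpr (Or.inr (Set.mem_insert _ _))
      · rw [show 3 * 0 + 3 = 3 by rfl, rep3]
        exact Set.mem_insert_iff.mpr (Or.inr (Set.mem_insert_iff.mpr (Or.inr rfl)))
    refine ⟨h1, ?_⟩
    have he : B2 (2 * 0 + 3) = B2 (2 * 0 + 2) * {[0]} := B2_odd 0
    rintro m (rfl | rfl | rfl)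
    · exact he ▸ mem_mul_of _ _ (3 * 0 + 1) 1 _ (h1 _ (Or.inl rfl)) (rep1 ▸ rfl) (by ring)
    · exact he ▸ mem_mul_of _ _ (3 * 0 + 2) 1 _ (h1 _ (Or.inr (Or.inl rfl))) (rep1 ▸ rfl) (by ring)
    · exact he ▸ mem_mul_of _ _ (3 * 0 + 3) 1 _ (h1 _ (Or.inr (Or.inr rfl))) (rep1 ▸ rfl) (by ring)
  | succ k ih =>
    have h1 : ∀ m, m = 3 * (k + 1) + 1 ∨ m = 3 * (k + 1) + 2 ∨ m = 3 * (k + 1) + 3 →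
        List.replicate m (0 : Fin 1) ∈ B2 (2 * (k + 1) + 2) := by
      have he : B2 (2 * (k + 1) + 2) = B2 (2 * k + 3) * {[0, 0]} := by
        rw [show 2 * (k + 1) + 2 = 2 * k + 4 by ring, B2_even]
      rintro m (rfl | rfl | rfl)
      · exact he ▸ mem_mul_of _ _ (3 * k + 2) 2 _ (ih.2 _ (Or.inl rfl)) (rep2 ▸ rfl) (by ring)
      · exact he ▸ mem_mul_of _ _ (3 * k + 3) 2 _ (ih.2 _ (Or.inr (Or.inl rfl))) (rep2 ▸ rfl) (by ring)
      · exact he ▸ mem_mul_of _ _ (3 * k + 4) 2 _ (ih.2 _ (Or.inr (Or.inr rfl))) (rep2 ▸ rfl) (by ring)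
    refine ⟨h1, ?_⟩
    have he : B2 (2 * (k + 1) + 3) = B2 (2 * (k + 1) + 2) * {[0]} := B2_odd (k + 1)
    rintro m (rfl | rfl | rfl)
    · exact he ▸ mem_mul_of _ _ (3 * (k + 1) + 1) 1 _ (h1 _ (Or.inl rfl)) (rep1 ▸ rfl) (by ring)
    · exact he ▸ mem_mul_of _ _ (3 * (k + 1) + 2) 1 _ (h1 _ (Or.inr (Or.inl rfl))) (rep1 ▸ rfl) (by ring)
    · exact he ▸ mem_mul_of _ _ (3 * (k + 1) + 3) 1 _ (h1 _ (Or.inr (Or.inr rfl))) (rep1 ▸ rfl) (by ring)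
lemma Bfam0 : Bfam 0 = B0 := rfl
lemma Bfam1 : Bfam 1 = B1 := rfl
lemma Bfam2 : Bfam 2 = B2 := rfl

lemma memB1one : List.replicate 0 (0 : Fin 1) ∈ B1 1 ∧ List.replicate 1 (0 : Fin 1) ∈ B1 1 :=
  ⟨rep0 ▸ Set.mem_insert _ _, rep1 ▸ Set.mem_insert_iff.mpr (Or.inr rfl)⟩

lemma memB2one : List.replicate 0 (0 : Fin 1) ∈ B2 1 ∧ List.replicate 1 (0 : Fin 1) ∈ B2 1 :=
  ⟨rep0 ▸ Set.mem_insert _ _, rep1 ▸ Set.mem_insert_iff.mpr (Or.inr rfl)⟩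

/-- Lemma 4.5 / (A.21): for every `I ⊆ ℕ`, `j ≥ 1` and `n ∈ ℕ`, the `j`-th
`A[I]`-extension of `0^n` exists and belongs to `B_{n mod 3}^j`. -/
theorem stmt19 (I : Set ℕ) (j n : ℕ) (hj : 1 ≤ j) :
    ∃ y : List (Fin 1), IsNthExt (AofI I) j (List.replicate n 0) y ∧ y ∈ Bfam (n % 3) j := by
  classical
  obtain ⟨q, r, hr3, rfl⟩ : ∃ q r, r < 3 ∧ n = 3 * q + r :=
    ⟨n / 3, n % 3, by omega, by omega⟩
  interval_cases r
  · -- r = 0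
    simp only [Nat.add_zero] at *
    have hmod : 3 * q % 3 = 0 := by omega
    rw [hmod, Bfam0]
    rcases Nat.even_or_odd j with he | ho
    · obtain ⟨k, hk⟩ : ∃ k, j = 2 * k + 2 := by
        obtain ⟨c, hc⟩ := he; exact ⟨c - 1, by omega⟩
      subst hk
      by_cases hI : q + k ∈ I
      · refine ⟨_, isNthExt_of I _ (3 * q) (3 * k + 1) ?_ ?_, (b0mem k).2 _ (Or.inl rfl)⟩
        · rw [show 3 * q + (3 * k + 1) = 3 * (q + k) + 1 by ring]; exact mem_Iext_1 hI
        · rw [cnt_succ, cnt0, if_mem3 I (q + k) (show 3 * q + 3 * k = 3 * (q + k) by ring)]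
          omega
      · refine ⟨_, isNthExt_of I _ (3 * q) (3 * k + 2) ?_ ?_, (b0mem k).2 _ (Or.inr rfl)⟩
        · rw [show 3 * q + (3 * k + 2) = 3 * (q + k) + 2 by ring]; exact mem_Iext_2 hI
        · rw [show 3 * k + 2 = 3 * k + 1 + 1 by rfl, cnt_succ, cnt_succ, cnt0,
            if_mem3 I (q + k) (show 3 * q + 3 * k = 3 * (q + k) by ring),
            if_mem1 I (q + k) (show 3 * q + (3 * k + 1) = 3 * (q + k) + 1 by ring)]
          simp [hI]
    · obtain ⟨k, rfl⟩ := ho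
      refine ⟨_, isNthExt_of I _ (3 * q) (3 * k) ?_ ?_, (b0mem k).1⟩
      · rw [show 3 * q + 3 * k = 3 * (q + k) by ring]; exact mem_Iext_3 I _
      · rw [cnt0]; omega
  · -- r = 1
    have hmod : (3 * q + 1) % 3 = 1 := by omega
    rw [hmod, Bfam1]
    rcases Nat.even_or_odd j with he | ho
    · obtain ⟨k, hk⟩ : ∃ k, j = 2 * k + 2 := by
        obtain ⟨c, hc⟩ := he; exact ⟨c - 1, by omega⟩
      subst hk
      refine ⟨_, isNthExt_of I _ (3 * q + 1) (3 * k + 2) ?_ ?_, (b1mem k).1⟩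
      · rw [show 3 * q + 1 + (3 * k + 2) = 3 * (q + k + 1) by ring]; exact mem_Iext_3 I _
      · rw [cnt1]; omega
    · obtain ⟨k, hk⟩ := ho
      match k, hk with
      | 0, hk =>
        subst hk
        by_cases hq : q ∈ I
        · refine ⟨_, isNthExt_of I _ (3 * q + 1) 0 ?_ ?_, memB1one.1⟩
          · rw [Nat.add_zero]; exact mem_Iext_1 hq
          · rw [cnt_zero]; omega
        · refine ⟨_, isNthExt_of I _ (3 * q + 1) 1 ?_ ?_, memB1one.2⟩
          · rw [show 3 * q + 1 + 1 = 3 * q + 2 by ring]; exact mem_Iext_2 hq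
          · rw [cnt_succ, cnt_zero, if_mem1 I q (show 3 * q + 1 + 0 = 3 * q + 1 by ring)]
            simp [hq]
      | (k + 1), hk =>
        have hk' : j = 2 * k + 3 := by omega
        subst hk'
        by_cases h : q + k + 1 ∈ I
        · refine ⟨_, isNthExt_of I _ (3 * q + 1) (3 * k + 3) ?_ ?_, (b1mem k).2 _ (Or.inl rfl)⟩
          · rw [show 3 * q + 1 + (3 * k + 3) = 3 * (q + k + 1) + 1 by ring]; exact mem_Iext_1 h
          · rw [show 3 * k + 3 = 3 * k + 2 + 1 by rfl, cnt_succ, cnt1,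
              if_mem3 I (q + k + 1) (show 3 * q + 1 + (3 * k + 2) = 3 * (q + k + 1) by ring)]
            omega
        · refine ⟨_, isNthExt_of I _ (3 * q + 1) (3 * k + 4) ?_ ?_, (b1mem k).2 _ (Or.inr rfl)⟩
          · rw [show 3 * q + 1 + (3 * k + 4) = 3 * (q + k + 1) + 2 by ring]; exact mem_Iext_2 h
          · rw [show 3 * k + 4 = 3 * k + 2 + 1 + 1 by rfl, cnt_succ, cnt_succ, cnt1,
              if_mem3 I (q + k + 1) (show 3 * q + 1 + (3 * k + 2) = 3 * (q + k + 1) by ring),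
              if_mem1 I (q + k + 1) (show 3 * q + 1 + (3 * k + 2 + 1) = 3 * (q + k + 1) + 1 by ring)]
            simp [h]
  · -- r = 2
    have hmod : (3 * q + 2) % 3 = 2 := by omega
    rw [hmod, Bfam2]
    rcases Nat.even_or_odd j with he | ho
    · obtain ⟨k, hk⟩ : ∃ k, j = 2 * k + 2 := by
        obtain ⟨c, hc⟩ := he; exact ⟨c - 1, by omega⟩
      subst hk
      by_cases hq : q ∈ I
      · by_cases h : q + k + 1 ∈ I
        · refine ⟨_, isNthExt_of I _ (3 * q + 2) (3 * k + 2) ?_ ?_,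
            (b2mem k).1 _ (Or.inr (Or.inl rfl))⟩
          · rw [show 3 * q + 2 + (3 * k + 2) = 3 * (q + k + 1) + 1 by ring]; exact mem_Iext_1 h
          · rw [show 3 * k + 2 = 3 * k + 1 + 1 by rfl, cnt_succ, cnt2,
              if_mem3 I (q + k + 1) (show 3 * q + 2 + (3 * k + 1) = 3 * (q + k + 1) by ring)]
            simp [hq]
        · refine ⟨_, isNthExt_of I _ (3 * q + 2) (3 * k + 3) ?_ ?_,
            (b2mem k).1 _ (Or.inr (Or.inr rfl))⟩
          · rw [show 3 * q + 2 + (3 * k + 3) = 3 * (q + k + 1) + 2 by ring]; exact mem_Iext_2 h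
          · rw [show 3 * k + 3 = 3 * k + 1 + 1 + 1 by rfl, cnt_succ, cnt_succ, cnt2,
              if_mem3 I (q + k + 1) (show 3 * q + 2 + (3 * k + 1) = 3 * (q + k + 1) by ring),
              if_mem1 I (q + k + 1) (show 3 * q + 2 + (3 * k + 1 + 1) = 3 * (q + k + 1) + 1 by ring)]
            simp [hq, h]
      · refine ⟨_, isNthExt_of I _ (3 * q + 2) (3 * k + 1) ?_ ?_, (b2mem k).1 _ (Or.inl rfl)⟩
        · rw [show 3 * q + 2 + (3 * k + 1) = 3 * (q + k + 1) by ring]; exact mem_Iext_3 I _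
        · rw [cnt2]; simp [hq]
    · obtain ⟨k, hk⟩ := ho
      match k, hk with
      | 0, hk =>
        subst hk
        by_cases hq : q ∈ I
        · refine ⟨_, isNthExt_of I _ (3 * q + 2) 1 ?_ ?_, memB2one.2⟩
          · rw [show 3 * q + 2 + 1 = 3 * (q + 1) by ring]; exact mem_Iext_3 I _
          · rw [cnt_succ, cnt_zero, if_mem2 I q (show 3 * q + 2 + 0 = 3 * q + 2 by ring)]
            simp [hq]
        · refine ⟨_, isNthExt_of I _ (3 * q + 2) 0 ?_ ?_, memB2one.1⟩
          · rw [Nat.add_zero]; exact mem_Iext_2 hq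
          · rw [cnt_zero]; omega
      | (k + 1), hk =>
        have hk' : j = 2 * k + 3 := by omega
        subst hk'
        by_cases hq : q ∈ I
        · refine ⟨_, isNthExt_of I _ (3 * q + 2) (3 * k + 4) ?_ ?_,
            (b2mem k).2 _ (Or.inr (Or.inr rfl))⟩
          · rw [show 3 * q + 2 + (3 * k + 4) = 3 * (q + k + 2) by ring]; exact mem_Iext_3 I _
          · rw [show 3 * k + 4 = 3 * (k + 1) + 1 by ring, cnt2]; simp [hq]; omega
        · by_cases h : q + k + 1 ∈ I
          · refine ⟨_, isNthExt_of I _ (3 * q + 2) (3 * k + 2) ?_ ?_,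
              (b2mem k).2 _ (Or.inl rfl)⟩
            · rw [show 3 * q + 2 + (3 * k + 2) = 3 * (q + k + 1) + 1 by ring]; exact mem_Iext_1 h
            · rw [show 3 * k + 2 = 3 * k + 1 + 1 by rfl, cnt_succ, cnt2,
                if_mem3 I (q + k + 1) (show 3 * q + 2 + (3 * k + 1) = 3 * (q + k + 1) by ring)]
              simp [hq]
          · refine ⟨_, isNthExt_of I _ (3 * q + 2) (3 * k + 3) ?_ ?_,
              (b2mem k).2 _ (Or.inr (Or.inl rfl))⟩
            · rw [show 3 * q + 2 + (3 * k + 3) = 3 * (q + k + 1) + 2 by ring]; exact mem_Iext_2 h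
            · rw [show 3 * k + 3 = 3 * k + 1 + 1 + 1 by rfl, cnt_succ, cnt_succ, cnt2,
                if_mem3 I (q + k + 1) (show 3 * q + 2 + (3 * k + 1) = 3 * (q + k + 1) by ring),
                if_mem1 I (q + k + 1) (show 3 * q + 2 + (3 * k + 1 + 1) = 3 * (q + k + 1) + 1 by ring)]
              simp [hq, h]
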